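/- For any positive integers n and any composition s = (s_1,...,s_n) of positive integers, the following identity holds: ∏_{i=1}^{n-1} (1 + ∑_{r=n-i+1}^{n} s_r) = ∑_{j} C(s_n+1, j_1) C(s_{n-1}+1, j_2) ··· C(s_2+1, j_{n-1}) · ∏_{i=1}^{n-1} (j_1 + ··· + j_i - i + 1), where the sum is over weak compositions j = (j_1,...,j_{n-1}) of n-1 satisfying j_1 + ··· + j_i ≥ i for all i, and C(a,b) denotes the binomial coefficient. -/

import Mathlib

namespace SPermutahedron

private lemma succ_mul_choose' (B k : ℕ) : (k+1) * B.choose (k+1) = B * (B-1).choose k := by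
  cases B with
  | zero => simp
  | succ b =>
    have := Nat.add_one_mul_choose_eq b k
    simp only [Nat.succ_eq_add_one, Nat.add_sub_cancel] at this ⊢
    rw [mul_comm, this, mul_comm]

private lemma keyid (B b l T : ℕ) (hB : 1 ≤ B) (hT : l + 1 ≤ T) :
    ∑ p ∈ Finset.HasAntidiagonal.antidiagonal T, (p.1 - l) * B.choose (p.1 - l) * b.choose p.2
      = B * (B + b - 1).choose (T - l - 1) := by
  rw [Finset.Nat.sum_antidiagonal_eq_sum_range_succ_mk]
  simp only []
  have hsplit : T.succ = (l + 1) + (T - l) := by omega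
  rw [hsplit, Finset.sum_range_add]
  have h1 : ∑ i ∈ Finset.range (l+1), (i - l) * B.choose (i - l) * b.choose (T - i) = 0 := by
    apply Finset.sum_eq_zero
    intro i hi
    simp only [Finset.mem_range] at hi
    have : i - l = 0 := by omega
    simp [this]
  rw [h1, zero_add]
  have h2 : ∀ u ∈ Finset.range (T - l),
      (l + 1 + u - l) * B.choose (l + 1 + u - l) * b.choose (T - (l + 1 + u))
        = B * ((B-1).choose u * b.choose (T - l - 1 - u)) := by
    intro u hu
    have e1 : l + 1 + u - l = u + 1 := by omega
    have e2 : T - (l + 1 + u) = T - l - 1 - u := by omega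
    rw [e1, e2, succ_mul_choose', mul_assoc]
  rw [Finset.sum_congr rfl h2, ← Finset.mul_sum]
  congr 1
  have hv := Nat.add_choose_eq (B-1) b (T - l - 1)
  rw [Finset.Nat.sum_antidiagonal_eq_sum_range_succ_mk] at hv
  have e3 : B + b - 1 = B - 1 + b := by omega
  have e4 : T - l - 1 + 1 = T - l := by omega
  rw [e3, hv]
  simp only [Nat.succ_eq_add_one, e4]

/-- Partial sums of `a`. -/
private def WA (a : ℕ → ℕ) (i : ℕ) : ℕ := ∑ k ∈ Finset.range (i+1), a k

/-- The weighted sum, defined by peeling the last coordinate. -/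
private def W (a : ℕ → ℕ) : ℕ → ℕ → ℕ
  | 0, T => if T = 0 then 1 else 0
  | (l+1), T => (T - l) * ∑ p ∈ Finset.HasAntidiagonal.antidiagonal T, W a l p.1 * (a l).choose p.2

private lemma WA_ge (a : ℕ → ℕ) (ha : ∀ i, 1 ≤ a i) (l : ℕ) : l + 1 ≤ WA a l := by
  calc l + 1 = ∑ k ∈ Finset.range (l+1), 1 := by simp
  _ ≤ WA a l := Finset.sum_le_sum (fun i _ => ha i)

private lemma W_closed (a : ℕ → ℕ) (ha : ∀ i, 1 ≤ a i) :
    ∀ l T, W a (l+1) T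
      = (T - l) * (∏ i ∈ Finset.range l, (WA a i - i)) * (WA a l - l).choose (T - l) := by
  intro l
  induction l with
  | zero =>
    intro T
    rw [show W a 1 = fun T => (T - 0) * ∑ p ∈ Finset.HasAntidiagonal.antidiagonal T, W a 0 p.1 * (a 0).choose p.2 from rfl]
    simp only [W]
    simp only [Finset.prod_range_zero, Nat.sub_zero, mul_one, one_mul]
    congr 1
    rw [Finset.Nat.sum_antidiagonal_eq_sum_range_succ_mk]
    rw [Finset.sum_eq_single 0]
    · simp [WA]
    · intro i _ hi; simp [hi]
    · intro h; simp at h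
  | succ l ih =>
    intro T
    rw [W]
    have hstep : ∀ p ∈ Finset.HasAntidiagonal.antidiagonal T, W a (l+1) p.1 * (a (l+1)).choose p.2
        = (∏ i ∈ Finset.range l, (WA a i - i)) *
          ((p.1 - l) * (WA a l - l).choose (p.1 - l) * (a (l+1)).choose p.2) := by
      intro p _
      rw [ih p.1]; ring
    rw [Finset.sum_congr rfl hstep, ← Finset.mul_sum]
    set B := WA a l - l with hBdef
    have hB : 1 ≤ B := by have := WA_ge a ha l; omega
    by_cases hT : l + 1 + 1 ≤ T
    · rw [keyid B (a (l+1)) l T hB (by omega)]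
      have hA : WA a (l+1) - (l+1) = B + a (l+1) - 1 := by
        have h1 : WA a (l+1) = WA a l + a (l+1) := by
          rw [WA, WA, Finset.sum_range_succ]
        have := WA_ge a ha l
        omega
      rw [hA, Finset.prod_range_succ, ← hBdef]
      have : T - l - 1 = T - (l+1) := by omega
      rw [this]; ring
    · have h0 : T - (l+1) = 0 := by omega
      rw [h0]; ring

private lemma sum_antidiagonalTuple_snoc {M : Type*} [AddCommMonoid M] (l T : ℕ)
    (f : (Fin (l+1) → ℕ) → M) :
    ∑ j ∈ Finset.Nat.antidiagonalTuple (l+1) T, f j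
      = ∑ p ∈ Finset.HasAntidiagonal.antidiagonal T, ∑ j ∈ Finset.Nat.antidiagonalTuple l p.1,
          f (Fin.snoc j p.2) := by
  have hsig := Finset.sum_sigma (Finset.HasAntidiagonal.antidiagonal T)
    (fun p => Finset.Nat.antidiagonalTuple l p.1) (fun x => f (Fin.snoc x.2 x.1.2))
  rw [← hsig]
  refine Finset.sum_bij' (fun j _ => (⟨(∑ i : Fin l, j i.castSucc, j (Fin.last l)), Fin.init j⟩ :
      Σ p : ℕ × ℕ, Fin l → ℕ))
    (fun x _ => Fin.snoc x.2 x.1.2) ?_ ?_ ?_ ?_ ?_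
  · intro j hj
    rw [Finset.Nat.mem_antidiagonalTuple] at hj
    rw [Finset.mem_sigma, Finset.HasAntidiagonal.mem_antidiagonal, Finset.Nat.mem_antidiagonalTuple]
    refine ⟨?_, ?_⟩
    · simp only []
      rw [← hj, Fin.sum_univ_castSucc]
    · rfl
  · intro x hx
    rw [Finset.mem_sigma, Finset.HasAntidiagonal.mem_antidiagonal, Finset.Nat.mem_antidiagonalTuple] at hx
    rw [Finset.Nat.mem_antidiagonalTuple, Fin.sum_univ_castSucc]
    simp only [Fin.snoc_castSucc, Fin.snoc_last]
    rw [hx.2, hx.1]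
  · intro j hj
    simp [Fin.snoc_init_self]
  · intro x hx
    rw [Finset.mem_sigma, Finset.HasAntidiagonal.mem_antidiagonal, Finset.Nat.mem_antidiagonalTuple] at hx
    ext
    · simp only [Fin.snoc_castSucc]
      exact hx.2
    · simp only [Fin.snoc_last]
    · simp [Fin.init_snoc]
  · intro j hj
    rw [Fin.snoc_init_self]

private lemma Iic_filter {l : ℕ} (i : Fin l) : Finset.Iic i = Finset.univ.filter (· ≤ i) := by
  ext k; simp

private lemma sum_Iic_snoc_castSucc {l : ℕ} (j : Fin l → ℕ) (t : ℕ) (i : Fin l) :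
    ∑ k ∈ Finset.Iic (Fin.castSucc i), (Fin.snoc j t : Fin (l+1) → ℕ) k
      = ∑ k ∈ Finset.Iic i, j k := by
  rw [Iic_filter, Iic_filter, Finset.sum_filter, Finset.sum_filter, Fin.sum_univ_castSucc]
  simp only [Fin.snoc_castSucc, Fin.snoc_last, Fin.castSucc_le_castSucc_iff]
  have : ¬ (Fin.last l ≤ Fin.castSucc i) := by
    simp [Fin.le_iff_val_le_val]
  rw [if_neg this, add_zero]

private lemma sum_Iic_snoc_last {l : ℕ} (j : Fin l → ℕ) (t : ℕ) :
    ∑ k ∈ Finset.Iic (Fin.last l), (Fin.snoc j t : Fin (l+1) → ℕ) k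
      = (∑ k, j k) + t := by
  have : Finset.Iic (Fin.last l) = Finset.univ := by
    ext k; simp [Fin.le_last]
  rw [this, Fin.sum_univ_castSucc]
  simp only [Fin.snoc_castSucc, Fin.snoc_last]

private lemma W_eq_sum (a : ℕ → ℕ) : ∀ l T,
    ∑ j ∈ Finset.Nat.antidiagonalTuple l T,
      (∏ i : Fin l, (a i).choose (j i)) *
        ∏ i : Fin l, ((∑ k ∈ Finset.Iic i, j k) - (i : ℕ))
      = W a l T := by
  intro l
  induction l with
  | zero =>
    intro T
    cases T with
    | zero => rw [Finset.Nat.antidiagonalTuple_zero_zero]; simp [W]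
    | succ T => rw [Finset.Nat.antidiagonalTuple_zero_succ]; simp [W]
  | succ l ih =>
    intro T
    rw [sum_antidiagonalTuple_snoc, W]
    rw [Finset.mul_sum]
    refine Finset.sum_congr rfl ?_
    intro p hp
    rw [Finset.HasAntidiagonal.mem_antidiagonal] at hp
    have hterm : ∀ j ∈ Finset.Nat.antidiagonalTuple l p.1,
        (∏ i : Fin (l+1), (a i).choose ((Fin.snoc j p.2 : Fin (l+1) → ℕ) i)) *
          ∏ i : Fin (l+1), ((∑ k ∈ Finset.Iic i, (Fin.snoc j p.2 : Fin (l+1) → ℕ) k) - (i : ℕ))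
        = ((T - l) * (a l).choose p.2) *
          ((∏ i : Fin l, (a i).choose (j i)) *
            ∏ i : Fin l, ((∑ k ∈ Finset.Iic i, j k) - (i : ℕ))) := by
      intro j hj
      rw [Finset.Nat.mem_antidiagonalTuple] at hj
      rw [Fin.prod_univ_castSucc, Fin.prod_univ_castSucc]
      simp only [Fin.snoc_castSucc, Fin.snoc_last, Fin.coe_castSucc, Fin.val_last]
      have h1 : ∀ i : Fin l,
          (∑ k ∈ Finset.Iic (Fin.castSucc i), (Fin.snoc j p.2 : Fin (l+1) → ℕ) k) =
            ∑ k ∈ Finset.Iic i, j k := fun i => sum_Iic_snoc_castSucc j p.2 i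
      have h2 : (∑ k ∈ Finset.Iic (Fin.last l), (Fin.snoc j p.2 : Fin (l+1) → ℕ) k) = T := by
        rw [sum_Iic_snoc_last, hj, hp]
      simp only [h1, h2]
      ring
    rw [Finset.sum_congr rfl hterm, ← Finset.mul_sum, ih p.1]
    ring

private lemma assembled (m : ℕ) (a : ℕ → ℕ) (ha1 : ∀ i, 1 ≤ a i) :
    ∑ j ∈ (Finset.Nat.antidiagonalTuple m m).filter
        (fun j => ∀ i : Fin m, (i : ℕ) + 1 ≤ ∑ k ∈ Finset.Iic i, j k),
      (∏ i : Fin m, (a i).choose (j i)) *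
        ∏ i : Fin m, ((∑ k ∈ Finset.Iic i, j k) - (i : ℕ))
    = ∏ i ∈ Finset.range m, (WA a i - i) := by
  have hfilter : ∑ j ∈ (Finset.Nat.antidiagonalTuple m m).filter
        (fun j => ∀ i : Fin m, (i : ℕ) + 1 ≤ ∑ k ∈ Finset.Iic i, j k),
      (∏ i : Fin m, (a i).choose (j i)) *
        ∏ i : Fin m, ((∑ k ∈ Finset.Iic i, j k) - (i : ℕ))
      = ∑ j ∈ Finset.Nat.antidiagonalTuple m m,
        (∏ i : Fin m, (a i).choose (j i)) *
          ∏ i : Fin m, ((∑ k ∈ Finset.Iic i, j k) - (i : ℕ)) := by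
    refine Finset.sum_subset (Finset.filter_subset _ _) ?_
    intro j hj hj'
    rw [Finset.mem_filter, not_and] at hj'
    obtain ⟨i, hi⟩ := not_forall.mp (hj' hj)
    have hzero : (∑ k ∈ Finset.Iic i, j k) - (i : ℕ) = 0 := by omega
    have hz2 : ∏ i : Fin m, ((∑ k ∈ Finset.Iic i, j k) - (i : ℕ)) = 0 :=
      Finset.prod_eq_zero (Finset.mem_univ i) hzero
    rw [hz2, mul_zero]
  rw [hfilter, W_eq_sum a m m]
  clear hfilter
  cases m with
  | zero =>
    rw [show W a 0 0 = 1 from rfl]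
    simp
  | succ l =>
    rw [W_closed a ha1 l (l+1)]
    have e6 : l + 1 - l = 1 := by omega
    rw [e6, Nat.choose_one_right, one_mul, Finset.prod_range_succ]

/-- (First Lidskii-type decomposition, Eq. (4).) For a
composition `s = (s₁, …, sₙ)` of positive integers,
`∏_{i=1}^{n-1} (1 + ∑_{r=n-i+1}^n s_r)
  = ∑_j C(sₙ+1, j₁) C(sₙ₋₁+1, j₂) ⋯ C(s₂+1, j_{n-1}) ∏_{i=1}^{n-1} (j₁+⋯+jᵢ-i+1)`,
the sum being over weak compositions `j` of `n-1` with `j₁+⋯+jᵢ ≥ i` for all `i`. -/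
theorem first_lidskii_decomposition (n : ℕ) (hn : 0 < n) (s : ℕ → ℕ)
    (hs : ∀ i, 1 ≤ i → i ≤ n → 1 ≤ s i) :
    ∏ i ∈ Finset.Icc 1 (n - 1), (1 + ∑ r ∈ Finset.Icc (n - i + 1) n, s r) =
      ∑ j ∈ (Finset.Nat.antidiagonalTuple (n - 1) (n - 1)).filter
          (fun j => ∀ i : Fin (n - 1), (i : ℕ) + 1 ≤ ∑ k ∈ Finset.Iic i, j k),
        (∏ i : Fin (n - 1), Nat.choose (s (n - (i : ℕ)) + 1) (j i)) *
          ∏ i : Fin (n - 1), ((∑ k ∈ Finset.Iic i, j k) - (i : ℕ)) := by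
  obtain ⟨N, rfl⟩ : ∃ N, n = N + 1 := ⟨n - 1, by omega⟩
  have hL : ∏ i ∈ Finset.Icc 1 N, (1 + ∑ r ∈ Finset.Icc (N + 1 - i + 1) (N + 1), s r)
      = ∏ i ∈ Finset.range N, (WA (fun k => s (N + 1 - k) + 1) i - i) := by
    rw [← Finset.Ico_add_one_right_eq_Icc, Finset.prod_Ico_eq_prod_range]
    refine Finset.prod_congr rfl ?_
    intro i hi
    rw [Finset.mem_range] at hi
    have e1 : N + 1 - (1 + i) + 1 = N + 1 - i := by omega
    rw [e1]
    have e2 : Finset.Icc (N + 1 - i) (N + 1) = Finset.Ico (N + 1 - i) (N + 2) := by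
      rw [show N + 2 = N + 1 + 1 from rfl, Finset.Ico_add_one_right_eq_Icc]
    rw [e2, Finset.sum_Ico_eq_sum_range]
    have e3 : N + 2 - (N + 1 - i) = i + 1 := by omega
    rw [e3]
    have e4 : ∑ k ∈ Finset.range (i + 1), s (N + 1 - i + k)
        = ∑ k ∈ Finset.range (i + 1), s (N + 1 - k) := by
      rw [← Finset.sum_range_reflect]
      refine Finset.sum_congr rfl ?_
      intro k hk
      rw [Finset.mem_range] at hk
      congr 1
      omega
    rw [e4]
    have e5 : WA (fun k => s (N + 1 - k) + 1) i
        = (∑ k ∈ Finset.range (i + 1), s (N + 1 - k)) + (i + 1) := by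
      simp only [WA, Finset.sum_add_distrib, Finset.sum_const, Finset.card_range, smul_eq_mul,
        mul_one]
    omega
  have key := assembled N (fun k => s (N + 1 - k) + 1) (fun i => Nat.le_add_left 1 _)
  have goal' : ∏ i ∈ Finset.Icc 1 N, (1 + ∑ r ∈ Finset.Icc (N + 1 - i + 1) (N + 1), s r)
      = ∑ j ∈ (Finset.Nat.antidiagonalTuple N N).filter
          (fun j => ∀ i : Fin N, (i : ℕ) + 1 ≤ ∑ k ∈ Finset.Iic i, j k),
        (∏ i : Fin N, ((fun k => s (N + 1 - k) + 1) (i : ℕ)).choose (j i)) *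
          ∏ i : Fin N, ((∑ k ∈ Finset.Iic i, j k) - (i : ℕ)) := hL.trans key.symm
  exact goal'

end SPermutahedron
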